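/- arXiv:2108.03858 — 5 statements merged into one kernel-verified Lean document; each statement's English description precedes it below -/
import Mathlib

section
/- Let q ∈ ℂ with q ≠ 0 and qⁿ ≠ 1 for all nonzero integers n. Let sequences h_k, x_k, g_k be given, with g_0 = 0 and h_n ≠ h_j whenever n > 0 and 0 ≤ j < n. Define Newton polynomials v_0(x) = 1 and v_k(x) = (x − x_0)(x − x_1)⋯(x − x_{k−1}) for k ≥ 1, and define monic polynomials u_n(x) = Σ_{k=0}^n c_{n,k} v_k(x) where c_{n,k} = Π_{j=k}^{n−1} g_{j+1}/(h_n − h_j). If L is a linear operator on polynomials satisfying L v_0 = h_0 v_0 and L v_n = h_n v_n + g_n v_{n−1} for n > 0, then L u_n = h_n u_n for all n ≥ 0. -/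
open Polynomial Finset

theorem verdeStar_eigen (q : ℂ) (hq : q ≠ 0) (hq1 : ∀ n : ℤ, n ≠ 0 → q ^ n ≠ 1)
    (h x g : ℕ → ℂ) (hg0 : g 0 = 0)
    (hh : ∀ n j : ℕ, 0 < n → j < n → h n ≠ h j)
    (v : ℕ → Polynomial ℂ)
    (hv : ∀ k, v k = ∏ j ∈ range k, (X - C (x j)))
    (c : ℕ → ℕ → ℂ)
    (hc : ∀ n k, c n k = ∏ j ∈ Ico k n, g (j + 1) / (h n - h j))
    (u : ℕ → Polynomial ℂ)
    (hu : ∀ n, u n = ∑ k ∈ range (n + 1), C (c n k) * v k)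
    (L : Polynomial ℂ →ₗ[ℂ] Polynomial ℂ)
    (hL0 : L (v 0) = C (h 0) * v 0)
    (hL : ∀ n, 0 < n → L (v n) = C (h n) * v n + C (g n) * v (n - 1)) :
    ∀ n, L (u n) = C (h n) * u n := by
  intro n
  have hLv : ∀ k, L (v k) = C (h k) * v k + C (g k) * v (k - 1) := by
    intro k
    cases k with
    | zero => simp [hL0, hg0]
    | succ m => exact hL (m + 1) (Nat.succ_pos m)
  have key : ∀ k, k < n → g (k + 1) * c n (k + 1) = (h n - h k) * c n k := by
    intro k hk
    have hpos : 0 < n := lt_of_le_of_lt (Nat.zero_le k) hk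
    have hne : h n - h k ≠ 0 := sub_ne_zero.mpr (hh n k hpos hk)
    rw [hc, hc, Finset.prod_eq_prod_Ico_succ_bot hk]
    field_simp
  have hLu : L (u n) = ∑ k ∈ range (n + 1),
      C (c n k) * (C (h k) * v k + C (g k) * v (k - 1)) := by
    rw [hu, map_sum]
    refine Finset.sum_congr rfl fun k _ => ?_
    rw [← Polynomial.smul_eq_C_mul, map_smul, hLv k, Polynomial.smul_eq_C_mul]
  set F : ℕ → Polynomial ℂ := fun k => C ((h n - h k) * c n k) * v k with hF
  have hGk : ∀ k ∈ range (n + 1),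
      C (c n k) * (C (h k) * v k + C (g k) * v (k - 1)) - C (h n) * (C (c n k) * v k)
        = (if k = 0 then 0 else F (k - 1)) - F k := by
    intro k hk
    cases k with
    | zero =>
      rw [if_pos rfl]
      simp only [hF, hg0, map_zero, zero_mul, map_mul, map_sub]
      ring
    | succ m =>
      have hm : m < n := Nat.lt_of_succ_lt_succ (mem_range.mp hk)
      simp only [if_neg (Nat.succ_ne_zero m), Nat.succ_sub_one, hF]
      rw [← key m hm]
      simp only [map_mul, map_sub]
      ring
  rw [← sub_eq_zero, hLu, hu, Finset.mul_sum, ← Finset.sum_sub_distrib,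
    Finset.sum_congr rfl hGk, Finset.sum_range_succ']
  have hFn : F n = 0 := by simp [hF]
  have htel : ∑ i ∈ range n, ((if i + 1 = 0 then 0 else F (i + 1 - 1)) - F (i + 1))
      = F 0 - F n := by
    simp only [Nat.succ_ne_zero, if_false, Nat.succ_sub_one]
    exact Finset.sum_range_sub' F n
  rw [htel, hFn]
  simp
end

section
/- Let q, a, b, c, d ∈ ℂ with q ≠ 0, qⁿ ≠ 1 for nonzero integers n, a ≠ 0, abcd q^m ≠ 1 for m ≥ 0, and ab q^{k−1}, ac q^{k−1}, ad q^{k−1} ≠ 1 as needed. The monic Askey–Wilson polynomial u_n(x) = [(ab,ac,ad;q)_n / (a^n (abcd q^{n−1};q)_n)] · ₄φ₃(q^{−n}, abcd q^{n−1}, az, a z^{−1}; ab, ac, ad; q, q), with x = z + z^{−1}, equals Σ_{k=0}^n c_{n,k} v_k(x), where v_k(x) = Π_{j=0}^{k−1}(x − a q^j − a^{−1} q^{−j}), c_{n,k} = Π_{j=k}^{n−1} g_{j+1}/(h_n − h_j), h_k = q^{−k}(1 − q^k)(1 − abcd q^{k−1}), and g_k = q^{−2k+1} a^{−1}(1 −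 ab q^{k−1})(1 − ac q^{k−1})(1 − ad q^{k−1})(1 − q^k). -/
open Finset

/-- q-shifted factorial (a;q)_k -/
noncomputable def qPoch (a q : ℂ) (k : ℕ) : ℂ := ∏ i ∈ range k, (1 - a * q ^ i)

/-- monic Askey-Wilson polynomial in the variable x = z + z⁻¹, via its ₄φ₃ representation -/
noncomputable def askeyWilson (q a b c d : ℂ) (n : ℕ) (z : ℂ) : ℂ :=
  qPoch (a * b) q n * qPoch (a * c) q n * qPoch (a * d) q n /
    (a ^ n * qPoch (a * b * c * d * q ^ ((n : ℤ) - 1)) q n) *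
  ∑ k ∈ range (n + 1),
    qPoch (q ^ (-(n : ℤ))) q k * qPoch (a * b * c * d * q ^ ((n : ℤ) - 1)) q k *
      qPoch (a * z) q k * qPoch (a * z⁻¹) q k /
    (qPoch q q k * qPoch (a * b) q k * qPoch (a * c) q k * qPoch (a * d) q k) * q ^ k

lemma zpow_neg_nat' (q : ℂ) (j : ℕ) : q ^ (-(j:ℤ)) = (q^j)⁻¹ := by
  rw [zpow_neg, zpow_natCast]

lemma zpow_nat_sub_one' (q : ℂ) (hq : q ≠ 0) (j : ℕ) : q ^ ((j:ℤ)-1) = q^j * q⁻¹ := by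
  rw [sub_eq_add_neg, zpow_add₀ hq, zpow_natCast, zpow_neg_one]

lemma qPoch_succ' (x q : ℂ) (k : ℕ) : qPoch x q (k+1) = qPoch x q k * (1 - x * q^k) :=
  prod_range_succ _ _

lemma qPoch_ne_zero' {x q : ℂ} {k : ℕ} (hx : ∀ i < k, x * q ^ i ≠ 1) : qPoch x q k ≠ 0 := by
  rw [qPoch]
  exact prod_ne_zero_iff.mpr fun i hi =>
    sub_ne_zero.mpr fun e => hx i (mem_range.mp hi) e.symm

lemma baseLemma' (q a : ℂ) (hq : q ≠ 0) :
    ∀ n : ℕ, qPoch ((q^n)⁻¹) q n * (∏ j ∈ range n, -(a*q^j)) * q^n = a^n * qPoch q q n := by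
  intro n
  induction n with
  | zero => simp [qPoch]
  | succ n ih =>
    have hsplit : qPoch ((q^(n+1))⁻¹) q (n+1)
        = qPoch ((q^n)⁻¹) q n * (1 - (q^(n+1))⁻¹) := by
      rw [qPoch, prod_range_succ', qPoch]
      congr 1
      · refine prod_congr rfl fun i _ => ?_
        congr 1
        rw [pow_succ, pow_succ, mul_inv]
        field_simp
      · rw [pow_zero, mul_one]
    rw [hsplit, prod_range_succ, qPoch_succ', pow_succ]
    have hc : q^(n+1) * (q^(n+1))⁻¹ = 1 := mul_inv_cancel₀ (pow_ne_zero _ hq)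
    linear_combination ((1 - (q^(n+1))⁻¹) * (-a) * q^(n+1)) * ih +
      (a^(n+1) * qPoch q q n) * hc

set_option maxHeartbeats 1000000 in
theorem askeyWilson_newton_expansion (q a b c d : ℂ)
    (hq : q ≠ 0) (hq1 : ∀ n : ℤ, n ≠ 0 → q ^ n ≠ 1) (ha : a ≠ 0)
    (habcd : ∀ m : ℕ, a * b * c * d * q ^ m ≠ 1)
    (hab : ∀ m : ℕ, a * b * q ^ m ≠ 1) (hac : ∀ m : ℕ, a * c * q ^ m ≠ 1)
    (had : ∀ m : ℕ, a * d * q ^ m ≠ 1)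
    (h g : ℕ → ℂ)
    (hh : ∀ k : ℕ, h k = q ^ (-(k : ℤ)) * (1 - q ^ k) * (1 - a * b * c * d * q ^ ((k : ℤ) - 1)))
    (hg : ∀ k : ℕ, g k = q ^ (-2 * (k : ℤ) + 1) * a⁻¹ * (1 - a * b * q ^ ((k : ℤ) - 1)) *
      (1 - a * c * q ^ ((k : ℤ) - 1)) * (1 - a * d * q ^ ((k : ℤ) - 1)) * (1 - q ^ k))
    (cf : ℕ → ℕ → ℂ)
    (hcf : ∀ n k, cf n k = ∏ j ∈ Ico k n, g (j + 1) / (h n - h j))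
    (n : ℕ) (z : ℂ) (hz : z ≠ 0) :
    askeyWilson q a b c d n z =
      ∑ k ∈ range (n + 1), cf n k *
        ∏ j ∈ range k, ((z + z⁻¹) - a * q ^ j - a⁻¹ * q ^ (-(j : ℤ))) := by
  have hq1' : ∀ m : ℕ, m ≠ 0 → (1 : ℂ) - q ^ m ≠ 0 := fun m hm => by
    refine sub_ne_zero.mpr fun e => hq1 m (by exact_mod_cast hm) ?_
    rw [zpow_natCast]; exact e.symm
  have hne1 : ∀ N j : ℕ, j < N → (q:ℂ)^j - q^N ≠ 0 := by
    intro N j hj e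
    have hN : (q:ℂ)^N = q^j * q^(N-j) := by rw [← pow_add]; congr 1; omega
    have e2 : (q:ℂ)^j * (1 - q^(N-j)) = 0 := by rw [hN] at e; linear_combination e
    exact hq1' (N-j) (by omega) ((mul_eq_zero.mp e2).resolve_left (pow_ne_zero _ hq))
  have hne2 : ∀ N j : ℕ, j < N → q - a*b*c*d*(q^N*q^j) ≠ 0 := by
    intro N j hj e
    have hp : (q:ℂ)^N*q^j = q^(N+j-1)*q := by
      rw [← pow_add, ← pow_succ]; congr 1; omega
    refine habcd (N+j-1) (mul_right_cancel₀ hq ?_)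
    rw [one_mul]
    linear_combination (-1:ℂ) * e - a*b*c*d*hp
  have hQq : ∀ k : ℕ, qPoch q q k ≠ 0 := fun k => qPoch_ne_zero' fun i _ e => by
    rw [← pow_succ'] at e
    exact hq1' (i+1) (by omega) (by rw [e, sub_self])
  have hQab : ∀ k : ℕ, qPoch (a*b) q k ≠ 0 := fun k => qPoch_ne_zero' fun i _ => hab i
  have hQac : ∀ k : ℕ, qPoch (a*c) q k ≠ 0 := fun k => qPoch_ne_zero' fun i _ => hac i
  have hQad : ∀ k : ℕ, qPoch (a*d) q k ≠ 0 := fun k => qPoch_ne_zero' fun i _ => had i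
  have hQα : ∀ k : ℕ, qPoch (a*b*c*d*(q^k * q⁻¹)) q k ≠ 0 := fun k =>
    qPoch_ne_zero' fun i hi e => by
      apply habcd (k - 1 + i)
      rw [← e, show k = (k-1)+1 by omega, pow_succ]
      field_simp
      ring_nf
      rw [show 1 + (k - 1) - 1 = k - 1 by omega]
  have hfactGen : ∀ N j : ℕ, j < N → h N - h j
      = (q^j - q^N) * (q - a*b*c*d*(q^N*q^j)) * (q^N*q^j*q)⁻¹ := by
    intro N j hj
    rw [hh, hh, zpow_neg_nat', zpow_neg_nat', zpow_nat_sub_one' q hq, zpow_nat_sub_one' q hq]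
    field_simp
    ring
  have hdiff : ∀ N j : ℕ, j < N → h N - h j ≠ 0 := fun N j hj => by
    rw [hfactGen N j hj]
    exact mul_ne_zero (mul_ne_zero (hne1 N j hj) (hne2 N j hj))
      (inv_ne_zero (mul_ne_zero (mul_ne_zero (pow_ne_zero _ hq) (pow_ne_zero _ hq)) hq))
  have hgk : ∀ k : ℕ, g (k+1) = (1 - a*b*q^k)*(1 - a*c*q^k)*(1 - a*d*q^k)*(1 - q*q^k) *
      (q^k*q^k*q*a)⁻¹ := by
    intro k
    rw [hg]
    push_cast
    rw [show (-2*((k:ℤ)+1)+1 : ℤ) = -(k:ℤ) + (-(k:ℤ) + -1) by ring,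
      show ((k:ℤ)+1-1 : ℤ) = ((k:ℕ):ℤ) by ring]
    rw [zpow_add₀ hq, zpow_add₀ hq, zpow_neg_nat', zpow_natCast, pow_succ]
    rw [show ((-1:ℤ)) = -(1:ℤ) from rfl, zpow_neg_one]
    field_simp
  have key : ∀ m k : ℕ,
      qPoch (a*b) q (k+m) * qPoch (a*c) q (k+m) * qPoch (a*d) q (k+m) *
        (qPoch (q ^ (-((k+m : ℕ) : ℤ))) q k * qPoch (a*b*c*d*q^(((k+m : ℕ) : ℤ)-1)) q k *
          (∏ j ∈ range k, -(a*q^j)) * q^k) *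
        ∏ j ∈ Ico k (k+m), (h (k+m) - h j)
      = (∏ j ∈ Ico k (k+m), g (j+1)) *
        (a^(k+m) * qPoch (a*b*c*d*q^(((k+m : ℕ) : ℤ)-1)) q (k+m) *
          (qPoch q q k * qPoch (a*b) q k * qPoch (a*c) q k * qPoch (a*d) q k)) := by
    intro m
    induction m with
    | zero =>
      intro k
      simp only [Nat.add_zero, Ico_self, prod_empty, mul_one, one_mul]
      rw [zpow_neg_nat', zpow_nat_sub_one' q hq]
      linear_combination (qPoch (a*b) q k * qPoch (a*c) q k * qPoch (a*d) q k *
        qPoch (a*b*c*d*(q^k*q⁻¹)) q k) * baseLemma' q a hq k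
    | succ m ih =>
      intro k
      have hlt : k < k + (m+1) := by omega
      have ih' := ih (k+1)
      rw [show k+1+m = k+(m+1) from by omega] at ih'
      rw [qPoch_succ', qPoch_succ', qPoch_succ', qPoch_succ', qPoch_succ', qPoch_succ',
        prod_range_succ, pow_succ] at ih'
      rw [zpow_neg_nat', zpow_nat_sub_one' q hq] at ih' ⊢
      rw [prod_eq_prod_Ico_succ_bot hlt (fun j => h (k+(m+1)) - h j),
        prod_eq_prod_Ico_succ_bot hlt (fun j => g (j+1))]
      have J : (h (k+(m+1)) - h k) * ((1 - q*q^k)*(1 - a*b*q^k)*(1 - a*c*q^k)*(1 - a*d*q^k))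
          = g (k+1) * ((1 - (q^(k+(m+1)))⁻¹*q^k) * (1 - a*b*c*d*(q^(k+(m+1))*q⁻¹)*q^k) *
            -(a*q^k) * q) := by
        rw [hgk, hfactGen (k+(m+1)) k hlt]
        field_simp
        ring
      have hF : ((1 - (q^(k+(m+1)))⁻¹*q^k) * (1 - a*b*c*d*(q^(k+(m+1))*q⁻¹)*q^k) *
          -(a*q^k) * q) ≠ 0 := by
        refine mul_ne_zero (mul_ne_zero (mul_ne_zero ?_ ?_) ?_) hq
        · have e1 : (1:ℂ) - (q^(k+(m+1)))⁻¹*q^k = (q^(k+(m+1)) - q^k) * (q^(k+(m+1)))⁻¹ := by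
            field_simp
          rw [e1]
          exact mul_ne_zero (fun e => hne1 (k+(m+1)) k hlt (by linear_combination -e))
            (inv_ne_zero (pow_ne_zero _ hq))
        · have e2 : (1:ℂ) - a*b*c*d*(q^(k+(m+1))*q⁻¹)*q^k
              = (q - a*b*c*d*(q^(k+(m+1))*q^k)) * q⁻¹ := by
            field_simp
          rw [e2]
          exact mul_ne_zero (hne2 (k+(m+1)) k hlt) (inv_ne_zero hq)
        · exact neg_ne_zero.mpr (mul_ne_zero ha (pow_ne_zero _ hq))
      apply mul_left_cancel₀ hF
      linear_combination (h (k+(m+1)) - h k) * ih' +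
        ((∏ j ∈ Ico (k+1) (k+(m+1)), g (j+1)) *
          (a^(k+(m+1)) * qPoch (a*b*c*d*(q^(k+(m+1))*q⁻¹)) q (k+(m+1)) *
            (qPoch q q k * qPoch (a*b) q k * qPoch (a*c) q k * qPoch (a*d) q k))) * J
  -- main assembly
  rw [askeyWilson, Finset.mul_sum]
  refine sum_congr rfl fun k hk => ?_
  have hkn : k ≤ n := Nat.lt_succ_iff.mp (mem_range.mp hk)
  have hzz : qPoch (a*z) q k * qPoch (a*z⁻¹) q k = (∏ j ∈ range k, -(a*q^j)) *
      ∏ j ∈ range k, ((z + z⁻¹) - a * q ^ j - a⁻¹ * q ^ (-(j : ℤ))) := by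
    rw [qPoch, qPoch, ← prod_mul_distrib, ← prod_mul_distrib]
    refine prod_congr rfl fun j _ => ?_
    rw [zpow_neg_nat']
    field_simp
    ring
  have K := key (n - k) k
  rw [show k + (n-k) = n from by omega] at K
  rw [hcf, prod_div_distrib]
  have hH : (∏ j ∈ Ico k n, (h n - h j)) ≠ 0 :=
    prod_ne_zero_iff.mpr fun j hj => hdiff n j (mem_Ico.mp hj).2
  have h5 : qPoch (a*b*c*d*q^((n:ℤ)-1)) q n ≠ 0 := by
    rw [zpow_nat_sub_one' q hq]; exact hQα n
  have h6 : (a:ℂ)^n ≠ 0 := pow_ne_zero _ ha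
  rw [mul_assoc (qPoch (q ^ (-(n:ℤ))) q k * qPoch (a*b*c*d*q^((n:ℤ)-1)) q k)
    (qPoch (a*z) q k) (qPoch (a*z⁻¹) q k), hzz]
  have h1 := hQq k
  have h2 := hQab k
  have h3 := hQac k
  have h4 := hQad k
  generalize qPoch (q ^ (-(n:ℤ))) q k = G1 at K ⊢
  generalize qPoch (a*b*c*d*q^((n:ℤ)-1)) q k = Gα at K ⊢
  generalize qPoch (a*b*c*d*q^((n:ℤ)-1)) q n = GαN at h5 K ⊢
  generalize (∏ j ∈ range k, -(a*q^j)) = C at K ⊢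
  generalize (∏ j ∈ range k, ((z + z⁻¹) - a * q ^ j - a⁻¹ * q ^ (-(j : ℤ)))) = V
  generalize (∏ j ∈ Ico k n, (h n - h j)) = Hp at hH K ⊢
  generalize (∏ j ∈ Ico k n, g (j+1)) = Gp at K ⊢
  field_simp
  linear_combination V * K
end

section
/- Let q, a, b ∈ ℂ with q ≠ 0, qⁿ ≠ 1 for nonzero n. Then for each n ≥ 0, lim_{a→∞} a^{−n} Q_n(½ a x; a, a b | q) = U_n^{(b)}(x; q), where Q_n(½x; a, b | q) = (ab; q)_n a^{−n} ₃φ₂(q^{−n}, az, a z^{−1}; ab, 0; q, q) (x = z + z^{−1}) is the Al-Salam–Chihara polynomial and U_n^{(b)}(x; q) = (−b)^n q^{n(n−1)/2} ₂φ₁(q^{−n}, x^{−1}; 0; q, q b^{−1} x) is the Al-Salam–Carlitz I polynomial. -/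
open Finset Filter

/-- Al-Salam–Chihara polynomial Q_n(x/2; A,B | q) as a function of x = z + z⁻¹,
via the ₃φ₂ representation, where (Az;q)_k (Az⁻¹;q)_k = ∏_{i<k} (1 - A q^i x + A² q^{2i})
and the lower parameter 0 contributes (0;q)_k = 1. -/
noncomputable def alSalamChihara (q A B : ℂ) (n : ℕ) (x : ℂ) : ℂ :=
  qPoch (A * B) q n * (A⁻¹) ^ n *
  ∑ k ∈ range (n + 1),
    qPoch (q ^ (-(n : ℤ))) q k / (qPoch q q k * qPoch (A * B) q k) *
    (∏ i ∈ range k, (1 - A * q ^ i * x + A ^ 2 * q ^ (2 * i))) * q ^ k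

/-- Al-Salam–Carlitz I polynomial U_n^{(b)}(x;q) via its ₂φ₁ representation. -/
noncomputable def alSalamCarlitzI (q b : ℂ) (n : ℕ) (x : ℂ) : ℂ :=
  (-b) ^ n * q ^ (n * (n - 1) / 2) *
  ∑ k ∈ range (n + 1),
    qPoch (q ^ (-(n : ℤ))) q k * qPoch x⁻¹ q k / qPoch q q k * (q * b⁻¹ * x) ^ k

theorem alSalamChihara_to_alSalamCarlitzI (q b : ℂ)
    (hq : q ≠ 0) (hq1 : ∀ n : ℤ, n ≠ 0 → q ^ n ≠ 1)
    (hb : b ≠ 0) (n : ℕ) (x : ℂ) (hx : x ≠ 0) :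
    Tendsto (fun a : ℂ => (a⁻¹) ^ n * alSalamChihara q a (a * b) n (a * x))
      (Bornology.cobounded ℂ) (nhds (alSalamCarlitzI q b n x)) := by
  classical
  -- The limit function in terms of t = a⁻¹
  set F : ℂ → ℂ := fun t => ∑ k ∈ range (n + 1),
      qPoch (q ^ (-(n : ℤ))) q k / qPoch q q k * q ^ k *
      ((∏ i ∈ Finset.Ico k n, (t ^ 2 - b * q ^ i)) *
        ∏ i ∈ range k, (t ^ 2 + q ^ (2 * i) - q ^ i * x)) with hF
  have hFc : Continuous F := by
    apply continuous_finset_sum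
    intro k _
    exact (continuous_const.mul
      ((continuous_finset_prod _ fun i _ => by continuity).mul
        (continuous_finset_prod _ fun i _ => by continuity)))
  -- value at 0
  have h0 : F 0 = alSalamCarlitzI q b n x := by
    rw [hF, alSalamCarlitzI]
    rw [Finset.mul_sum]
    refine Finset.sum_congr rfl fun k hk => ?_
    have hk' : k ≤ n := Nat.lt_succ_iff.mp (Finset.mem_range.mp hk)
    have hA : (∏ i ∈ Finset.Ico k n, ((0 : ℂ) ^ 2 - b * q ^ i))
        = (-b) ^ (n - k) * q ^ (∑ i ∈ Finset.Ico k n, i) := by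
      have h1 : ∀ i ∈ Finset.Ico k n, ((0 : ℂ) ^ 2 - b * q ^ i) = (-b) * q ^ i :=
        fun i _ => by ring
      rw [Finset.prod_congr rfl h1, Finset.prod_mul_distrib, Finset.prod_const,
        Finset.prod_pow_eq_pow_sum, Nat.card_Ico]
    have hB : (∏ i ∈ range k, ((0 : ℂ) ^ 2 + q ^ (2 * i) - q ^ i * x))
        = (-x) ^ k * q ^ (∑ i ∈ range k, i) * qPoch x⁻¹ q k := by
      have h1 : ∀ i ∈ range k, ((0 : ℂ) ^ 2 + q ^ (2 * i) - q ^ i * x)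
          = (-x) * (q ^ i * (1 - x⁻¹ * q ^ i)) := by
        intro i _
        field_simp
        ring
      rw [Finset.prod_congr rfl h1, Finset.prod_mul_distrib, Finset.prod_mul_distrib,
        Finset.prod_const, Finset.card_range, Finset.prod_pow_eq_pow_sum, qPoch, mul_assoc]
    rw [hA, hB]
    have hsum : (∑ i ∈ range k, i) + (∑ i ∈ Finset.Ico k n, i) = n * (n - 1) / 2 := by
      rw [← Finset.sum_range_id n, Finset.range_eq_Ico, Finset.range_eq_Ico]
      exact Finset.sum_Ico_consecutive _ (Nat.zero_le k) hk'
    have hq2 : (q : ℂ) ^ (∑ i ∈ Finset.Ico k n, i) * q ^ (∑ i ∈ range k, i)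
        = q ^ (n * (n - 1) / 2) := by
      rw [← pow_add, ← hsum, Nat.add_comm]
    have hbk : ((-b : ℂ)) ^ (n - k) * (-b) ^ k = (-b) ^ n := by
      rw [← pow_add, Nat.sub_add_cancel hk']
    have hxk : ((-x : ℂ)) ^ k = (-b) ^ k * (b⁻¹ * x) ^ k := by
      rw [← mul_pow]
      congr 1
      field_simp
    have hdiv : qPoch (q ^ (-(n : ℤ))) q k * qPoch x⁻¹ q k / qPoch q q k
        = qPoch (q ^ (-(n : ℤ))) q k / qPoch q q k * qPoch x⁻¹ q k := by
      rw [mul_div_right_comm]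
    rw [hdiv]
    calc qPoch (q ^ (-(n : ℤ))) q k / qPoch q q k * q ^ k *
          ((-b) ^ (n - k) * q ^ (∑ i ∈ Finset.Ico k n, i) *
            ((-x) ^ k * q ^ (∑ i ∈ range k, i) * qPoch x⁻¹ q k))
        = ((-b) ^ (n - k) * (-b) ^ k) *
            (q ^ (∑ i ∈ Finset.Ico k n, i) * q ^ (∑ i ∈ range k, i)) *
            (qPoch (q ^ (-(n : ℤ))) q k / qPoch q q k * qPoch x⁻¹ q k *
              (q ^ k * (b⁻¹ * x) ^ k)) := by rw [hxk]; ring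
      _ = (-b) ^ n * q ^ (n * (n - 1) / 2) *
            (qPoch (q ^ (-(n : ℤ))) q k / qPoch q q k * qPoch x⁻¹ q k * (q * b⁻¹ * x) ^ k) := by
          rw [hbk, hq2]; ring
  -- the main limit via continuity of F and a⁻¹ → 0
  have hinv : Tendsto (fun a : ℂ => a⁻¹) (Bornology.cobounded ℂ) (nhds 0) :=
    tendsto_inv₀_cobounded
  have hmain : Tendsto (fun a : ℂ => F a⁻¹) (Bornology.cobounded ℂ)
      (nhds (alSalamCarlitzI q b n x)) := by
    rw [← h0]
    exact (hFc.tendsto 0).comp hinv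
  -- eventual equality
  have hev : ∀ᶠ a : ℂ in Bornology.cobounded ℂ,
      a ≠ 0 ∧ ∀ i ∈ range n, (1 : ℂ) - a * (a * b) * q ^ i ≠ 0 := by
    have h1 : ∀ᶠ a : ℂ in Bornology.cobounded ℂ, 1 < ‖a‖ :=
      tendsto_norm_cobounded_atTop.eventually_gt_atTop 1
    have h2 : ∀ᶠ a : ℂ in Bornology.cobounded ℂ, ∀ i ∈ range n, ‖b * q ^ i‖⁻¹ < ‖a‖ := by
      rw [Filter.eventually_all_finset]
      intro i _
      exact tendsto_norm_cobounded_atTop.eventually_gt_atTop _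
    filter_upwards [h1, h2] with a ha1 ha2
    have ha0 : a ≠ 0 := by
      intro h; rw [h] at ha1; simp at ha1; linarith
    refine ⟨ha0, fun i hi => ?_⟩
    have hbq : b * q ^ i ≠ 0 := mul_ne_zero hb (pow_ne_zero _ hq)
    have hbq' : (0 : ℝ) < ‖b * q ^ i‖ := norm_pos_iff.mpr hbq
    have key : 1 < ‖a * (a * b) * q ^ i‖ := by
      have : a * (a * b) * q ^ i = a * (a * (b * q ^ i)) := by ring
      rw [this, norm_mul, norm_mul]
      have h3 : ‖b * q ^ i‖⁻¹ < ‖a‖ := ha2 i hi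
      have h4 : 1 < ‖a‖ * ‖b * q ^ i‖ :=
        (div_lt_iff₀ hbq').mp (by rw [one_div]; exact h3)
      calc (1 : ℝ) = 1 * 1 := by ring
        _ < ‖a‖ * (‖a‖ * ‖b * q ^ i‖) := by
            apply mul_lt_mul' (le_of_lt ha1) h4 (by norm_num)
            linarith
    intro h
    have : a * (a * b) * q ^ i = 1 := by
      have := sub_eq_zero.mp h
      linear_combination -this
    rw [this] at key
    simp at key
  refine hmain.congr' ?_
  filter_upwards [hev] with a ⟨ha0, haprod⟩
  -- show F a⁻¹ = LHS at this a
  rw [hF]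
  simp only
  rw [alSalamChihara, Finset.mul_sum, Finset.mul_sum]
  refine Finset.sum_congr rfl fun k hk => ?_
  have hk' : k ≤ n := Nat.lt_succ_iff.mp (Finset.mem_range.mp hk)
  set c := qPoch (q ^ (-(n : ℤ))) q k with hc
  set P := qPoch q q k with hP
  set Q := qPoch (a * (a * b)) q k with hQ
  set S := ∏ i ∈ Finset.Ico k n, ((1 : ℂ) - a * (a * b) * q ^ i) with hS
  set R := ∏ i ∈ range k, ((1 : ℂ) - a * q ^ i * (a * x) + a ^ 2 * q ^ (2 * i)) with hR
  have hQn : qPoch (a * (a * b)) q n = Q * S := by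
    rw [hQ, hS, qPoch, qPoch, Finset.range_eq_Ico, Finset.range_eq_Ico]
    exact (Finset.prod_Ico_consecutive _ (Nat.zero_le k) hk').symm
  have hQne : Q ≠ 0 := by
    rw [hQ, qPoch]
    exact Finset.prod_ne_zero_iff.mpr fun i hi =>
      haprod i (Finset.mem_range.mpr (lt_of_lt_of_le (Finset.mem_range.mp hi) hk'))
  have ha2 : (a⁻¹ : ℂ) ^ 2 * a ^ 2 = 1 := by
    field_simp
  have hAeq : ((a⁻¹ : ℂ) ^ 2) ^ (n - k) * S =
      ∏ i ∈ Finset.Ico k n, ((a⁻¹ : ℂ) ^ 2 - b * q ^ i) := by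
    rw [hS, ← Nat.card_Ico k n, ← Finset.prod_const, ← Finset.prod_mul_distrib]
    refine Finset.prod_congr rfl fun i _ => ?_
    have : (a⁻¹ : ℂ) ^ 2 * (1 - a * (a * b) * q ^ i)
        = a⁻¹ ^ 2 - (a⁻¹ ^ 2 * a ^ 2) * b * q ^ i := by ring
    rw [this, ha2, one_mul]
  have hBeq : ((a⁻¹ : ℂ) ^ 2) ^ k * R =
      ∏ i ∈ range k, ((a⁻¹ : ℂ) ^ 2 + q ^ (2 * i) - q ^ i * x) := by
    have h1 : ∀ i ∈ range k, ((a⁻¹ : ℂ) ^ 2 + q ^ (2 * i) - q ^ i * x)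
        = a⁻¹ ^ 2 * (1 - a * q ^ i * (a * x) + a ^ 2 * q ^ (2 * i)) := by
      intro i _
      have h2 : (a⁻¹ : ℂ) ^ 2 * (1 - a * q ^ i * (a * x) + a ^ 2 * q ^ (2 * i))
          = a⁻¹ ^ 2 - (a⁻¹ ^ 2 * a ^ 2) * (q ^ i * x) + (a⁻¹ ^ 2 * a ^ 2) * q ^ (2 * i) := by
        ring
      rw [h2, ha2, one_mul, one_mul]
      ring
    rw [Finset.prod_congr rfl h1, Finset.prod_mul_distrib, Finset.prod_const,
      Finset.card_range, hR]
  have hsplit : ((a⁻¹ : ℂ) ^ 2) ^ (n - k) * ((a⁻¹) ^ 2) ^ k = (a⁻¹ : ℂ) ^ n * (a⁻¹) ^ n := by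
    rw [← pow_add, Nat.sub_add_cancel hk', ← pow_mul, two_mul, pow_add]
  have hdd : c / (P * Q) = c / P / Q := by rw [div_div]
  have hcancel : c / P / Q * Q = c / P := div_mul_cancel₀ _ hQne
  calc c / P * q ^ k *
        ((∏ i ∈ Finset.Ico k n, ((a⁻¹ : ℂ) ^ 2 - b * q ^ i)) *
          ∏ i ∈ range k, ((a⁻¹ : ℂ) ^ 2 + q ^ (2 * i) - q ^ i * x))
      = (((a⁻¹ : ℂ) ^ 2) ^ (n - k) * S) * (((a⁻¹) ^ 2) ^ k * R) * (c / P) * q ^ k := by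
        rw [hAeq, hBeq]; ring
    _ = (((a⁻¹ : ℂ) ^ 2) ^ (n - k) * ((a⁻¹) ^ 2) ^ k) * S * R * (c / P / Q * Q) * q ^ k := by
        rw [hcancel]; ring
    _ = ((a⁻¹ : ℂ) ^ n * (a⁻¹) ^ n) * S * R * (c / P / Q * Q) * q ^ k := by rw [hsplit]
    _ = (a⁻¹ : ℂ) ^ n * (qPoch (a * (a * b)) q n * a⁻¹ ^ n * (c / (P * Q) * R * q ^ k)) := by
        rw [hQn, hdd]; ring
end

section
/- Let q, a ∈ ℂ with q ≠ 0, qⁿ ≠ 1 for nonzero n, and a q^k ≠ 1 as needed. Then for each n ≥ 0, lim_{a→0} (−1)ⁿ q^{n(n−1)/2} (aq; q)_n p_n(x; a; q) = xⁿ (x^{−1}; q)_n, where p_n(x; a; q) = ₂φ₁(q^{−n}, 0; qa; q, qx) is the little q-Laguerre polynomial. -/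
open Finset Filter

noncomputable def littleqLaguerre (q a : ℂ) (n : ℕ) (x : ℂ) : ℂ :=
  ∑ k ∈ range (n + 1),
    qPoch (q ^ (-(n : ℤ))) q k / (qPoch q q k * qPoch (q * a) q k) * (q * x) ^ k

noncomputable def cc (q : ℂ) (n k : ℕ) : ℂ :=
  qPoch (q ^ (-(n : ℤ))) q k / qPoch q q k * q ^ k

lemma qPoch_zero (q : ℂ) (k : ℕ) : qPoch 0 q k = 1 := by simp [qPoch]

lemma qPoch_q_ne_zero {q : ℂ} (hq : q ≠ 0) (hq1 : ∀ n : ℤ, n ≠ 0 → q ^ n ≠ 1) (k : ℕ) :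
    qPoch q q k ≠ 0 := by
  refine Finset.prod_ne_zero_iff.2 fun i _ h => ?_
  have : q ^ ((i : ℤ) + 1) = 1 := by
    rw [zpow_add₀ hq, zpow_one, zpow_natCast]; linear_combination -h
  exact hq1 _ (by omega) this

lemma qPoch_shift (q : ℂ) (hq : q ≠ 0) (m : ℤ) (k : ℕ) :
    qPoch (q ^ (m - 1)) q (k + 1) = (1 - q ^ (m - 1)) * qPoch (q ^ m) q k := by
  rw [qPoch, Finset.prod_range_succ', pow_zero, mul_one, mul_comm]
  congr 1
  rw [qPoch]
  refine Finset.prod_congr rfl fun i _ => ?_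
  congr 1
  rw [← zpow_natCast q (i + 1), ← zpow_natCast q i, ← zpow_add₀ hq, ← zpow_add₀ hq]
  congr 1
  push_cast; ring

lemma step (q : ℂ) (hq : q ≠ 0) (hq1 : ∀ n : ℤ, n ≠ 0 → q ^ n ≠ 1) (n k : ℕ) :
    q ^ n * cc q (n + 1) (k + 1) = q ^ n * cc q n (k + 1) - cc q n k := by
  have hP := qPoch_q_ne_zero hq hq1 k
  have hF : (1 : ℂ) - q * q ^ k ≠ 0 := by
    intro h
    refine hq1 ((k : ℤ) + 1) (by omega) ?_
    rw [zpow_add₀ hq, zpow_one, zpow_natCast]; linear_combination -h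
  have hA : qPoch (q ^ (-(n : ℤ))) q (k + 1)
      = qPoch (q ^ (-(n : ℤ))) q k * (1 - q ^ (-(n : ℤ)) * q ^ k) := by
    rw [qPoch, Finset.prod_range_succ, qPoch]
  have hQ : qPoch q q (k + 1) = qPoch q q k * (1 - q * q ^ k) := by
    rw [qPoch, Finset.prod_range_succ, qPoch]
  unfold cc
  rw [show (-((n + 1 : ℕ) : ℤ)) = (-(n : ℤ)) - 1 by push_cast; ring,
    qPoch_shift q hq, hA, hQ]
  have e1 : q ^ (-(n : ℤ) - 1) = (q ^ (n + 1 : ℕ))⁻¹ := by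
    rw [← zpow_natCast, ← zpow_neg]; congr 1; push_cast; ring
  have e2 : q ^ (-(n : ℤ)) = (q ^ (n : ℕ))⁻¹ := by rw [zpow_neg, zpow_natCast]
  rw [e1, e2]
  field_simp
  ring

lemma cc_top (q : ℂ) (hq : q ≠ 0) (n : ℕ) : cc q n (n + 1) = 0 := by
  unfold cc qPoch
  rw [Finset.prod_eq_zero (Finset.self_mem_range_succ n)]
  · simp
  · rw [← zpow_natCast q n, ← zpow_add₀ hq]
    simp

lemma cc_zero (q : ℂ) (m : ℕ) : cc q m 0 = 1 := by simp [cc, qPoch]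

lemma key (q : ℂ) (hq : q ≠ 0) (hq1 : ∀ n : ℤ, n ≠ 0 → q ^ n ≠ 1) (x : ℂ) :
    ∀ n : ℕ, (-1 : ℂ) ^ n * q ^ (n * (n - 1) / 2) *
      ∑ k ∈ range (n + 1), cc q n k * x ^ k = ∏ j ∈ range n, (x - q ^ j) := by
  intro n
  induction n with
  | zero => simp [cc, qPoch]
  | succ n ih =>
    have hsum : q ^ n * ∑ k ∈ range (n + 1 + 1), cc q (n + 1) k * x ^ k
        = (q ^ n - x) * ∑ k ∈ range (n + 1), cc q n k * x ^ k := by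
      have e1 : ∑ k ∈ range (n + 1 + 1), cc q (n + 1) k * x ^ k
          = (∑ k ∈ range (n + 1), cc q (n + 1) (k + 1) * x ^ (k + 1)) + 1 := by
        rw [Finset.sum_range_succ' (fun k => cc q (n + 1) k * x ^ k) (n + 1)]
        simp [cc_zero]
      have e2 : ∑ k ∈ range (n + 1), cc q n k * x ^ k
          = (∑ k ∈ range (n + 1), cc q n (k + 1) * x ^ (k + 1)) + 1 := by
        have h := Finset.sum_range_succ (fun k => cc q n k * x ^ k) (n + 1)
        rw [Finset.sum_range_succ' (fun k => cc q n k * x ^ k) (n + 1)] at h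
        simp only [cc_top q hq, zero_mul, add_zero, cc_zero, pow_zero, mul_one] at h
        linear_combination -h
      have e3 : q ^ n * ∑ k ∈ range (n + 1), cc q (n + 1) (k + 1) * x ^ (k + 1)
          = q ^ n * (∑ k ∈ range (n + 1), cc q n (k + 1) * x ^ (k + 1))
            - x * ∑ k ∈ range (n + 1), cc q n k * x ^ k := by
        rw [Finset.mul_sum, Finset.mul_sum, Finset.mul_sum, ← Finset.sum_sub_distrib]
        refine Finset.sum_congr rfl fun k _ => ?_
        linear_combination x ^ (k + 1) * step q hq hq1 n k
      linear_combination (q : ℂ) ^ n * e1 + e3 - q ^ n * e2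
    have exp : (n + 1) * ((n + 1) - 1) / 2 = n * (n - 1) / 2 + n := by
      cases n with
      | zero => rfl
      | succ m =>
        have h : (m + 1 + 1) * (m + 1 + 1 - 1) = (m + 1) * (m + 1 - 1) + 2 * (m + 1) := by
          simp only [Nat.add_sub_cancel]; ring
        omega
    rw [Finset.prod_range_succ, ← ih, exp, pow_add]
    linear_combination (-((-1 : ℂ)) ^ n) * q ^ (n * (n - 1) / 2) * hsum

theorem littleqLaguerre_limit (q : ℂ)
    (hq : q ≠ 0) (hq1 : ∀ n : ℤ, n ≠ 0 → q ^ n ≠ 1)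
    (n : ℕ) (x : ℂ) :
    Tendsto (fun a : ℂ =>
        (-1) ^ n * q ^ (n * (n - 1) / 2) * qPoch (a * q) q n * littleqLaguerre q a n x)
      (nhdsWithin 0 {0}ᶜ) (nhds (∏ j ∈ range n, (x - q ^ j))) := by
  have hcp : ∀ k : ℕ, Continuous fun a : ℂ => qPoch (q * a) q k := by
    intro k
    unfold qPoch
    exact continuous_finset_prod _ fun i _ => by continuity
  have hcp' : Continuous fun a : ℂ => qPoch (a * q) q n := by
    unfold qPoch
    exact continuous_finset_prod _ fun i _ => by continuity
  have hcont : ContinuousAt (fun a : ℂ =>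
      (-1) ^ n * q ^ (n * (n - 1) / 2) * qPoch (a * q) q n * littleqLaguerre q a n x) 0 := by
    refine ContinuousAt.mul (continuousAt_const.mul hcp'.continuousAt) ?_
    unfold littleqLaguerre
    apply tendsto_finset_sum
    intro k _
    refine (ContinuousAt.div continuousAt_const
      (continuousAt_const.mul (hcp k).continuousAt) ?_).mul continuousAt_const
    have : qPoch (q * 0) q k = 1 := by rw [mul_zero, qPoch_zero]
    simp only [Pi.mul_apply, this, mul_one]
    exact qPoch_q_ne_zero hq hq1 k
  have h0 : (-1 : ℂ) ^ n * q ^ (n * (n - 1) / 2) * qPoch (0 * q) q n *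
      littleqLaguerre q 0 n x = ∏ j ∈ range n, (x - q ^ j) := by
    rw [zero_mul, qPoch_zero, mul_one, ← key q hq hq1 x n]
    congr 1
    unfold littleqLaguerre
    refine Finset.sum_congr rfl fun k _ => ?_
    rw [mul_zero, qPoch_zero, mul_one, mul_pow]
    unfold cc
    ring
  have h2 := hcont.tendsto.mono_left (nhdsWithin_le_nhds (s := ({0}ᶜ : Set ℂ)))
  rw [h0] at h2
  exact h2
end

section
/- Let q ∈ ℂ, q ≠ 0, qⁿ ≠ 1 for nonzero n, and b ∈ ℂ. With x_k = q^{−k}, h_k = q^{−k} − 1, g_k = (1 − q^{−k})(b − q^{1−k}), v_k(x) = Π_{j=0}^{k−1}(x − q^{−j}), and c_{n,k} = Π_{j=k}^{n−1} g_{j+1}/(h_n − h_j), the polynomial u_n(x) = Σ_{k=0}^n c_{n,k} v_k(x) equals xⁿ (b x^{−1}; q)_n = Π_{j=0}^{n−1}(x − b q^j). -/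
set_option maxHeartbeats 1000000

open Polynomial Finset

private lemma vs4b_telescope (q : ℂ) (hq : q ≠ 0) :
    ∀ t m n : ℕ, m + t = n →
      (1 - q ^ (t+1)) * (q⁻¹) ^ t * ∏ j ∈ Ico m n, ((q⁻¹) ^ n - (q⁻¹) ^ j)
        = (1 - q) * ∏ j ∈ Ico m n, ((q⁻¹) ^ (n+1) - (q⁻¹) ^ j) := by
  intro t
  induction t with
  | zero =>
    intro m n hmn
    have : n = m := by omega
    subst this
    simp
  | succ t ih =>
    intro m n hmn
    have hlt : m < n := by omega
    have H := ih (m+1) n (by omega)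
    rw [Finset.prod_eq_prod_Ico_succ_bot hlt, Finset.prod_eq_prod_Ico_succ_bot hlt]
    have key : (1 - q ^ (t+1+1)) * (q⁻¹) ^ (t+1) * ((q⁻¹) ^ n - (q⁻¹) ^ m)
        = ((q⁻¹) ^ (n+1) - (q⁻¹) ^ m) * ((1 - q ^ (t+1)) * (q⁻¹) ^ t) := by
      have hn : n = m + t + 1 := by omega
      subst hn
      simp only [inv_pow]
      field_simp
      ring
    calc (1 - q ^ (t+1+1)) * (q⁻¹) ^ (t+1) *
          (((q⁻¹) ^ n - (q⁻¹) ^ m) * ∏ j ∈ Ico (m+1) n, ((q⁻¹) ^ n - (q⁻¹) ^ j))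
        = ((1 - q ^ (t+1+1)) * (q⁻¹) ^ (t+1) * ((q⁻¹) ^ n - (q⁻¹) ^ m)) *
            ∏ j ∈ Ico (m+1) n, ((q⁻¹) ^ n - (q⁻¹) ^ j) := by ring
      _ = ((q⁻¹) ^ (n+1) - (q⁻¹) ^ m) *
            ((1 - q ^ (t+1)) * (q⁻¹) ^ t * ∏ j ∈ Ico (m+1) n, ((q⁻¹) ^ n - (q⁻¹) ^ j)) := by
            rw [key]; ring
      _ = ((q⁻¹) ^ (n+1) - (q⁻¹) ^ m) *
            ((1 - q) * ∏ j ∈ Ico (m+1) n, ((q⁻¹) ^ (n+1) - (q⁻¹) ^ j)) := by rw [H]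
      _ = (1 - q) * (((q⁻¹) ^ (n+1) - (q⁻¹) ^ m) *
            ∏ j ∈ Ico (m+1) n, ((q⁻¹) ^ (n+1) - (q⁻¹) ^ j)) := by ring

private lemma vs4b_recA (q b : ℂ)
    (hq : q ≠ 0)
    (hpow1 : ∀ i : ℕ, i ≠ 0 → q ^ i ≠ 1)
    (hq1' : q ≠ 1)
    (g : ℕ → ℂ)
    (hg : ∀ k, g k = (1 - q⁻¹ ^ k) * (b - q * q⁻¹ ^ k))
    (hAnz : ∀ m n : ℕ, (∏ j ∈ Ico m n, ((q⁻¹) ^ n - (q⁻¹) ^ j)) ≠ 0)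
    (n : ℕ) :
    (∏ j ∈ Ico 0 (n+1), g (j+1)) / (∏ j ∈ Ico 0 (n+1), ((q⁻¹) ^ (n+1) - (q⁻¹) ^ j))
      = (∏ j ∈ Ico 0 n, g (j+1)) / (∏ j ∈ Ico 0 n, ((q⁻¹) ^ n - (q⁻¹) ^ j)) * (1 - b * q ^ n) := by
  rw [Finset.prod_Ico_succ_top (Nat.zero_le n) (fun j => g (j+1)),
      Finset.prod_Ico_succ_top (Nat.zero_le n) (fun j => (q⁻¹) ^ (n+1) - (q⁻¹) ^ j)]
  have Tn := vs4b_telescope q hq n 0 n (by omega)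
  have hA := hAnz 0 n
  have h1q : (1:ℂ) - q ≠ 0 := sub_ne_zero_of_ne (Ne.symm hq1')
  have h1qn : (1:ℂ) - q ^ (n+1) ≠ 0 := sub_ne_zero_of_ne (Ne.symm (hpow1 (n+1) (by omega)))
  have hqn : q ^ n ≠ 0 := pow_ne_zero n hq
  rw [hg (n+1)]
  set P := ∏ j ∈ Ico 0 n, g (j+1) with hP
  set A := ∏ j ∈ Ico 0 n, ((q⁻¹) ^ n - (q⁻¹) ^ j) with hAdef
  set B := ∏ j ∈ Ico 0 n, ((q⁻¹) ^ (n+1) - (q⁻¹) ^ j) with hBdef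
  clear_value P A B
  clear hP hAdef hBdef hAnz hg hpow1
  simp only [pow_succ, inv_pow] at Tn h1qn ⊢
  generalize hQ : q ^ n = Q at Tn h1qn hqn ⊢
  field_simp at Tn
  have hB : B = (1 - Q * q) * A / ((1 - q) * Q) := by
    field_simp
    linear_combination -Tn
  have hd2 : Q⁻¹ * q⁻¹ - Q⁻¹ = (1 - q) * (Q⁻¹ * q⁻¹) := by
    field_simp
  rw [hB, hd2]
  field_simp
  ring

private lemma vs4b_recB (q b : ℂ)
    (hq : q ≠ 0)
    (hpow1 : ∀ i : ℕ, i ≠ 0 → q ^ i ≠ 1)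
    (hq1' : q ≠ 1)
    (g : ℕ → ℂ)
    (hg : ∀ k, g k = (1 - q⁻¹ ^ k) * (b - q * q⁻¹ ^ k))
    (hAnz : ∀ m n : ℕ, (∏ j ∈ Ico m n, ((q⁻¹) ^ n - (q⁻¹) ^ j)) ≠ 0)
    (hBnz : ∀ m n : ℕ, (∏ j ∈ Ico m n, ((q⁻¹) ^ (n+1) - (q⁻¹) ^ j)) ≠ 0)
    (n k : ℕ) (hk : k < n) :
    (∏ j ∈ Ico (k+1) (n+1), g (j+1)) / (∏ j ∈ Ico (k+1) (n+1), ((q⁻¹) ^ (n+1) - (q⁻¹) ^ j))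
      = (∏ j ∈ Ico k n, g (j+1)) / (∏ j ∈ Ico k n, ((q⁻¹) ^ n - (q⁻¹) ^ j))
        + (q⁻¹ ^ (k+1) - b * q ^ n) *
          ((∏ j ∈ Ico (k+1) n, g (j+1)) / (∏ j ∈ Ico (k+1) n, ((q⁻¹) ^ n - (q⁻¹) ^ j))) := by
  obtain ⟨t, rfl⟩ : ∃ t, n = k + 1 + t := ⟨n - (k+1), by omega⟩
  set n := k + 1 + t with hn
  rw [Finset.prod_Ico_succ_top (by omega : k + 1 ≤ n) (fun j => g (j+1)),
      Finset.prod_Ico_succ_top (by omega : k + 1 ≤ n) (fun j => (q⁻¹) ^ (n+1) - (q⁻¹) ^ j),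
      Finset.prod_eq_prod_Ico_succ_bot (by omega : k < n) (fun j => g (j+1)),
      Finset.prod_eq_prod_Ico_succ_bot (by omega : k < n) (fun j => (q⁻¹) ^ n - (q⁻¹) ^ j)]
  have Tn := vs4b_telescope q hq t (k+1) n (by omega)
  have hA := hAnz (k+1) n
  have hB0 := hBnz (k+1) n
  have h1q : (1:ℂ) - q ≠ 0 := sub_ne_zero_of_ne (Ne.symm hq1')
  have h1qt : (1:ℂ) - q ^ (t+1) ≠ 0 := sub_ne_zero_of_ne (Ne.symm (hpow1 (t+1) (by omega)))
  have hqk : q ^ k ≠ 0 := pow_ne_zero k hq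
  have hqt : q ^ t ≠ 0 := pow_ne_zero t hq
  rw [hg (n+1), hg (k+1)]
  set P := ∏ j ∈ Ico (k+1) n, g (j+1) with hP
  set A := ∏ j ∈ Ico (k+1) n, ((q⁻¹) ^ n - (q⁻¹) ^ j) with hAdef
  set B := ∏ j ∈ Ico (k+1) n, ((q⁻¹) ^ (n+1) - (q⁻¹) ^ j) with hBdef
  clear_value P A B
  clear hP hAdef hBdef hAnz hBnz hg hpow1
  rw [hn] at *
  simp only [pow_succ, pow_add, inv_pow, mul_inv_rev] at Tn h1qt ⊢
  generalize hK : q ^ k = K at *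
  generalize hT : q ^ t = Tq at *
  field_simp at Tn
  have hd1 : K⁻¹ * q⁻¹ * Tq⁻¹ * q⁻¹ - K⁻¹ * q⁻¹ * Tq⁻¹
      = (1 - q) * (K⁻¹ * q⁻¹ * Tq⁻¹ * q⁻¹) := by
    have e : K⁻¹ * q⁻¹ * Tq⁻¹ = q * (K⁻¹ * q⁻¹ * Tq⁻¹ * q⁻¹) := by
      field_simp
      try ring
    linear_combination -e
  have hd2 : K⁻¹ * q⁻¹ * Tq⁻¹ - K⁻¹ = (1 - Tq * q) * (K⁻¹ * q⁻¹ * Tq⁻¹) := by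
    have e : (K : ℂ)⁻¹ = Tq * q * (K⁻¹ * q⁻¹ * Tq⁻¹) := by
      field_simp
      try ring
    linear_combination -e
  rw [hd1, hd2, mul_div_assoc']
  have hKi : (K : ℂ)⁻¹ * q⁻¹ * Tq⁻¹ ≠ 0 :=
    mul_ne_zero (mul_ne_zero (inv_ne_zero hqk) (inv_ne_zero hq)) (inv_ne_zero hqt)
  have den2 : (1 - Tq * q) * (K⁻¹ * q⁻¹ * Tq⁻¹) * A ≠ 0 :=
    mul_ne_zero (mul_ne_zero h1qt hKi) hA
  have den1 : B * ((1 - q) * (K⁻¹ * q⁻¹ * Tq⁻¹ * q⁻¹)) ≠ 0 :=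
    mul_ne_zero hB0 (mul_ne_zero h1q (mul_ne_zero hKi (inv_ne_zero hq)))
  rw [div_add_div _ _ den2 hA, div_eq_div_iff den1 (mul_ne_zero den2 hA)]
  field_simp
  linear_combination (P*(K*q^2*Tq-1)*(K*q*Tq*b-1)) * Tn

theorem verdeStar_case4b (q b : ℂ)
    (hq : q ≠ 0) (hq1 : ∀ n : ℤ, n ≠ 0 → q ^ n ≠ 1)
    (h x g : ℕ → ℂ)
    (hx : ∀ k, x k = q⁻¹ ^ k)
    (hh : ∀ k, h k = q⁻¹ ^ k - 1)
    (hg : ∀ k, g k = (1 - q⁻¹ ^ k) * (b - q * q⁻¹ ^ k))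
    (c : ℕ → ℕ → ℂ)
    (hc : ∀ n k, c n k = ∏ j ∈ Ico k n, g (j + 1) / (h n - h j))
    (v : ℕ → Polynomial ℂ)
    (hv : ∀ k, v k = ∏ j ∈ range k, (X - C (x j)))
    (u : ℕ → Polynomial ℂ)
    (hu : ∀ n, u n = ∑ k ∈ range (n + 1), C (c n k) * v k)
    (n : ℕ) :
    u n = ∏ j ∈ range n, (X - C (b * q ^ j)) := by
  have hpow1 : ∀ i : ℕ, i ≠ 0 → q ^ i ≠ 1 := by
    intro i hi
    have := hq1 (i : ℤ) (by exact_mod_cast hi)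
    rwa [zpow_natCast] at this
  have hq1' : q ≠ 1 := by have := hpow1 1 one_ne_zero; rwa [pow_one] at this
  have hdiff : ∀ j m : ℕ, j < m → (q⁻¹) ^ m - (q⁻¹) ^ j ≠ 0 := by
    intro j m hjm hzero
    have e : ((q : ℂ) ^ m)⁻¹ = (q ^ j)⁻¹ := by
      rw [← inv_pow, ← inv_pow]; exact sub_eq_zero.mp hzero
    have e' : (q : ℂ) ^ m = q ^ j := inv_injective e
    have e2 : q ^ (m - j) * q ^ j = 1 * q ^ j := by
      rw [← pow_add, Nat.sub_add_cancel hjm.le, e', one_mul]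
    exact hpow1 (m - j) (by omega) (mul_right_cancel₀ (pow_ne_zero j hq) e2)
  have hAnz : ∀ m n : ℕ, (∏ j ∈ Ico m n, ((q⁻¹) ^ n - (q⁻¹) ^ j)) ≠ 0 := by
    intro m n
    exact Finset.prod_ne_zero_iff.mpr fun j hj => hdiff j n (mem_Ico.mp hj).2
  have hBnz : ∀ m n : ℕ, (∏ j ∈ Ico m n, ((q⁻¹) ^ (n+1) - (q⁻¹) ^ j)) ≠ 0 := by
    intro m n
    exact Finset.prod_ne_zero_iff.mpr fun j hj => hdiff j (n+1)
      (by have := (mem_Ico.mp hj).2; omega)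
  have hc' : ∀ n k : ℕ, c n k
      = (∏ j ∈ Ico k n, g (j + 1)) / (∏ j ∈ Ico k n, ((q⁻¹) ^ n - (q⁻¹) ^ j)) := by
    intro n k
    rw [hc]
    simp only [hh, sub_sub_sub_cancel_right, Finset.prod_div_distrib]
  have lemA : ∀ n : ℕ, c (n+1) 0 = c n 0 * (1 - b * q ^ n) := by
    intro n
    rw [hc', hc']
    exact vs4b_recA q b hq hpow1 hq1' g hg hAnz n
  have lemB : ∀ n k : ℕ, k < n →
      c (n+1) (k+1) = c n k + (q⁻¹ ^ (k+1) - b * q ^ n) * c n (k+1) := by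
    intro n k hk
    rw [hc', hc', hc']
    exact vs4b_recB q b hq hpow1 hq1' g hg hAnz hBnz n k hk
  induction n with
  | zero => simp [hu, hc, hv]
  | succ n ih =>
    rw [prod_range_succ, ← ih, hu, hu]
    have hsplit : ∀ k : ℕ,
        v k * (X - C (b * q ^ n)) = v (k+1) + C (q⁻¹ ^ k - b * q ^ n) * v k := by
      intro k
      rw [hv (k+1), prod_range_succ, ← hv, hx, C_sub]
      ring
    have htop : c (n+1) (n+1) = c n n := by simp [hc]
    calc (∑ k ∈ range (n + 1 + 1), C (c (n+1) k) * v k)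
        = (∑ k ∈ range (n + 1), C (c (n+1) (k+1)) * v (k+1)) + C (c (n+1) 0) * v 0 := by
          rw [Finset.sum_range_succ']
      _ = ((∑ k ∈ range n, C (c (n+1) (k+1)) * v (k+1)) + C (c (n+1) (n+1)) * v (n+1))
            + C (c (n+1) 0) * v 0 := by rw [Finset.sum_range_succ]
      _ = ((∑ k ∈ range n, (C (c n k) * v (k+1)
              + C (c n (k+1)) * (C (q⁻¹ ^ (k+1) - b * q ^ n) * v (k+1))))
            + C (c n n) * v (n+1)) + (C (c n 0) * (C (q⁻¹ ^ 0 - b * q ^ n) * v 0)) := by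
          rw [lemA n, htop]
          congr 1
          · congr 1
            apply Finset.sum_congr rfl
            intro k hk
            rw [lemB n k (mem_range.mp hk), C_add, C_mul]
            ring
          · rw [pow_zero, C_mul, C_sub]
            ring
      _ = ((∑ k ∈ range n, C (c n k) * v (k+1))
            + ∑ k ∈ range n, C (c n (k+1)) * (C (q⁻¹ ^ (k+1) - b * q ^ n) * v (k+1)))
            + C (c n n) * v (n+1) + (C (c n 0) * (C (q⁻¹ ^ 0 - b * q ^ n) * v 0)) := by
          rw [Finset.sum_add_distrib]
          try ring
      _ = ((∑ k ∈ range (n+1), C (c n k) * v (k+1))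
            + ∑ k ∈ range (n+1), C (c n k) * (C (q⁻¹ ^ k - b * q ^ n) * v k)) := by
          rw [Finset.sum_range_succ (fun k => C (c n k) * v (k+1)),
              Finset.sum_range_succ' (fun k => C (c n k) * (C (q⁻¹ ^ k - b * q ^ n) * v k))]
          ring
      _ = (∑ k ∈ range (n + 1), C (c n k) * v k) * (X - C (b * q ^ n)) := by
          rw [Finset.sum_mul, ← Finset.sum_add_distrib]
          apply Finset.sum_congr rfl
          intro k _
          rw [mul_assoc, hsplit k]
          ring
end
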